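/- (Theorem on Infinitary Definitions) Let F be an infinitary propositional formula over σ, let Q ⊆ σ be a set of atoms none of which occurs in F, and let G be a definition for Q. Then the map I ↦ I \ Q is a one-to-one correspondence between the stable models of F ∧ G and the stable models of F. -/
import Mathlib


/-- Infinitary propositional formulas over signature `σ`:
atoms, conjunctions and disjunctions of (index-)sets of formulas, implication. -/
inductive Formula (σ : Type) : Type 1
  | atom : σ → Formula σ
  | conj : (ι : Type) → (ι → Formula σ) → Formula σ
  | disj : (ι : Type) → (ι → Formula σ) → Formula σ
  | imp : Formula σ → Formula σ → Formula σ

namespace Formula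

variable {σ : Type}

/-- `⊥` is the empty disjunction. -/
def bot : Formula σ := Formula.disj Empty (fun e => e.elim)

/-- Binary conjunction `F ∧ G`. -/
def and (F G : Formula σ) : Formula σ := Formula.conj Bool (fun b => if b then F else G)

/-- Binary disjunction `F ∨ G`. -/
def or (F G : Formula σ) : Formula σ := Formula.disj Bool (fun b => if b then F else G)

/-- Negation `¬F` abbreviates `F → ⊥`. -/
def neg (F : Formula σ) : Formula σ := Formula.imp F bot

/-- Conjunction of a set of atoms. -/
def conjAtoms (S : Set σ) : Formula σ := Formula.conj S (fun p => Formula.atom p.val)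

/-- Satisfaction of an infinitary formula by an interpretation `I ⊆ σ`. -/
def Sat (I : Set σ) : Formula σ → Prop
  | .atom p => p ∈ I
  | .conj _ f => ∀ i, Sat I (f i)
  | .disj _ f => ∃ i, Sat I (f i)
  | .imp F G => Sat I F → Sat I G

open Classical in
/-- The reduct `F^I`. -/
noncomputable def reduct (I : Set σ) : Formula σ → Formula σ
  | .atom p => if p ∈ I then Formula.atom p else bot
  | .conj ι f => Formula.conj ι (fun i => reduct I (f i))
  | .disj ι f => Formula.disj ι (fun i => reduct I (f i))
  | .imp F G => if Sat I (Formula.imp F G) then Formula.imp (reduct I F) (reduct I G) else bot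

/-- `I` is an `A`-stable model of `F`: `I` is minimal w.r.t. `≤_A`
(`J ≤_A I` iff `J ⊆ I` and `I \ J ⊆ A`) among interpretations satisfying `F^I`. -/
def AStable (A : Set σ) (I : Set σ) (F : Formula σ) : Prop :=
  Sat I (reduct I F) ∧ ∀ J : Set σ, J ⊆ I → I \ J ⊆ A → Sat J (reduct I F) → J = I

/-- A stable model is a `σ`-stable model. -/
def Stable (I : Set σ) (F : Formula σ) : Prop := AStable Set.univ I F

/-- The strictly positive atoms `P(F)`. -/
def spos : Formula σ → Set σ
  | .atom p => {p}
  | .conj _ f => ⋃ i, spos (f i)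
  | .disj _ f => ⋃ i, spos (f i)
  | .imp _ H => spos H

/-- `F` is (syntactically) the formula `⊥`, i.e. an empty disjunction. -/
def IsBot : Formula σ → Prop
  | .disj ι _ => IsEmpty ι
  | _ => False

open Classical in
mutual
/-- Positive nonnegated atoms `Pnn(F)`. -/
noncomputable def pnn : Formula σ → Set σ
  | .atom p => {p}
  | .conj _ f => ⋃ i, pnn (f i)
  | .disj _ f => ⋃ i, pnn (f i)
  | .imp G H => if IsBot H then ∅ else nnn G ∪ pnn H

/-- Negative nonnegated atoms `Nnn(F)`. -/
noncomputable def nnn : Formula σ → Set σ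
  | .atom _ => ∅
  | .conj _ f => ⋃ i, nnn (f i)
  | .disj _ f => ⋃ i, nnn (f i)
  | .imp G H => if IsBot H then ∅ else pnn G ∪ nnn H
end

/-- The rules of a formula, as antecedent/consequent pairs. -/
def rules : Formula σ → Set (Formula σ × Formula σ)
  | .atom _ => ∅
  | .conj _ f => ⋃ i, rules (f i)
  | .disj _ f => ⋃ i, rules (f i)
  | .imp G H => insert (G, H) (rules H)

/-- Edge relation of the positive dependency graph `DG_A[F]` (vertex set `A`). -/
noncomputable def DGEdge (F : Formula σ) (A : Set σ) (p q : σ) : Prop :=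
  p ∈ A ∧ q ∈ A ∧ ∃ R ∈ rules F, p ∈ spos R.2 ∧ q ∈ pnn R.1

/-- The atoms occurring in a formula. -/
def atoms : Formula σ → Set σ
  | .atom p => {p}
  | .conj _ f => ⋃ i, atoms (f i)
  | .disj _ f => ⋃ i, atoms (f i)
  | .imp G H => atoms G ∪ atoms H

/-- `G` is a definition for the set `Q` of atoms: a conjunction of formulas
`H ∧ C^∧ → q` with `q ∈ Q`, `C ⊆ Q`, and no atom of `Q` occurring in `H`. -/
def IsDefinition (Q : Set σ) (G : Formula σ) : Prop :=
  ∃ (ι : Type) (g : ι → Formula σ), G = Formula.conj ι g ∧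
    ∀ i, ∃ (H : Formula σ) (C : Set σ) (q : σ),
      q ∈ Q ∧ C ⊆ Q ∧ (∀ p ∈ Q, p ∉ atoms H) ∧
      g i = Formula.imp (Formula.and H (conjAtoms C)) (Formula.atom q)

end Formula

section Graph

variable {V : Type*}

/-- An infinite walk in the directed graph with edge relation `E`. -/
def IsInfWalk (E : V → V → Prop) (w : ℕ → V) : Prop := ∀ i, E (w i) (w (i + 1))

/-- The partition `{P₁, P₂}` is infinitely separable: every infinite walk
visits `P₁` or `P₂` only finitely often. -/
def InfSeparable (E : V → V → Prop) (P1 P2 : Set V) : Prop :=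
  ∀ w : ℕ → V, IsInfWalk E w → {i | w i ∈ P1}.Finite ∨ {i | w i ∈ P2}.Finite

/-- `u` and `v` are in the same strongly connected component:
each is reachable from the other. -/
def SameSCC (E : V → V → Prop) (u v : V) : Prop :=
  Relation.ReflTransGen E u v ∧ Relation.ReflTransGen E v u

/-- The partition `{P₁, P₂}` is separable: every strongly connected
component is contained in `P₁` or in `P₂`. -/
def Separable (E : V → V → Prop) (P1 P2 : Set V) : Prop :=
  ∀ u v, SameSCC E u v → ((u ∈ P1 ∧ v ∈ P1) ∨ (u ∈ P2 ∧ v ∈ P2))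

end Graph
namespace Formula

variable {σ : Type}

lemma not_sat_bot {I : Set σ} : ¬ Sat I (bot (σ := σ)) := by
  rintro ⟨i, -⟩; exact i.elim

lemma atoms_bot : atoms (bot (σ := σ)) = ∅ := by
  simp [bot, atoms]

theorem sat_congr {I I' : Set σ} :
    ∀ {F : Formula σ}, (∀ p ∈ atoms F, (p ∈ I ↔ p ∈ I')) → (Sat I F ↔ Sat I' F) := by
  intro F
  induction F with
  | atom p => intro h; exact h p (by simp [atoms])
  | conj ι f ih =>
      intro h
      have : ∀ i, Sat I (f i) ↔ Sat I' (f i) := fun i =>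
        ih i (fun p hp => h p (by simp [atoms]; exact ⟨i, hp⟩))
      simp only [Sat]
      exact forall_congr' this
  | disj ι f ih =>
      intro h
      have : ∀ i, Sat I (f i) ↔ Sat I' (f i) := fun i =>
        ih i (fun p hp => h p (by simp [atoms]; exact ⟨i, hp⟩))
      simp only [Sat]
      exact exists_congr this
  | imp A B ihA ihB =>
      intro h
      have hA := ihA (fun p hp => h p (by simp [atoms]; exact Or.inl hp))
      have hB := ihB (fun p hp => h p (by simp [atoms]; exact Or.inr hp))
      simp only [Sat]
      exact imp_congr hA hB

theorem atoms_reduct {I : Set σ} : ∀ {F : Formula σ}, atoms (reduct I F) ⊆ atoms F := by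
  intro F
  induction F with
  | atom p =>
      by_cases h : p ∈ I <;> simp [reduct, h, atoms_bot]
  | conj ι f ih =>
      simp only [reduct, atoms]
      exact Set.iUnion_mono fun i => ih i
  | disj ι f ih =>
      simp only [reduct, atoms]
      exact Set.iUnion_mono fun i => ih i
  | imp A B ihA ihB =>
      by_cases h : Sat I (Formula.imp A B)
      · simp only [reduct, if_pos h, atoms]
        exact Set.union_subset_union ihA ihB
      · simp only [reduct, if_neg h, atoms_bot]
        exact Set.empty_subset _

theorem reduct_congr {I I' : Set σ} :
    ∀ {F : Formula σ}, (∀ p ∈ atoms F, (p ∈ I ↔ p ∈ I')) → reduct I F = reduct I' F := by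
  intro F
  induction F with
  | atom p =>
      intro h
      have := h p (by simp [atoms])
      by_cases hp : p ∈ I
      · rw [reduct, reduct, if_pos hp, if_pos (this.mp hp)]
      · rw [reduct, reduct, if_neg hp, if_neg (fun hh => hp (this.mpr hh))]
  | conj ι f ih =>
      intro h
      simp only [reduct]
      congr 1
      funext i
      exact ih i (fun p hp => h p (by simp [atoms]; exact ⟨i, hp⟩))
  | disj ι f ih =>
      intro h
      simp only [reduct]
      congr 1
      funext i
      exact ih i (fun p hp => h p (by simp [atoms]; exact ⟨i, hp⟩))
  | imp A B ihA ihB =>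
      intro h
      have hs : Sat I (Formula.imp A B) ↔ Sat I' (Formula.imp A B) := sat_congr h
      by_cases hc : Sat I (Formula.imp A B)
      · rw [reduct, reduct, if_pos hc, if_pos (hs.mp hc),
          ihA (fun p hp => h p (by simp [atoms]; exact Or.inl hp)),
          ihB (fun p hp => h p (by simp [atoms]; exact Or.inr hp))]
      · rw [reduct, reduct, if_neg hc, if_neg (fun hh => hc (hs.mpr hh))]

theorem sat_of_sat_reduct {I K : Set σ} :
    ∀ {F : Formula σ}, Sat K (reduct I F) → Sat I F := by
  intro F
  induction F with
  | atom p =>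
      intro h
      by_cases hp : p ∈ I
      · exact hp
      · rw [reduct, if_neg hp] at h; exact absurd h not_sat_bot
  | conj ι f ih => intro h i; exact ih i (h i)
  | disj ι f ih => rintro ⟨i, hi⟩; exact ⟨i, ih i hi⟩
  | imp A B ihA ihB =>
      intro h
      by_cases hc : Sat I (Formula.imp A B)
      · exact hc
      · rw [reduct, if_neg hc] at h; exact absurd h not_sat_bot

theorem sat_reduct_self {I : Set σ} : ∀ {F : Formula σ}, Sat I (reduct I F) ↔ Sat I F := by
  intro F
  constructor
  · exact sat_of_sat_reduct
  · induction F with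
    | atom p => intro h; rw [reduct, if_pos (show p ∈ I from h)]; exact h
    | conj ι f ih => intro h i; exact ih i (h i)
    | disj ι f ih => rintro ⟨i, hi⟩; exact ⟨i, ih i hi⟩
    | imp A B ihA ihB =>
        intro h
        rw [reduct, if_pos h]
        intro hA
        exact ihB (h (sat_of_sat_reduct hA))

theorem sat_reduct_congr {I K : Set σ} {F : Formula σ}
    (h : ∀ p ∈ atoms F, (p ∈ K ↔ p ∈ I)) : Sat K (reduct I F) ↔ Sat I F := by
  rw [sat_congr (I' := I) (fun p hp => h p (atoms_reduct hp)), sat_reduct_self]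

end Formula
namespace Formula

variable {σ : Type}

lemma sat_atom {I : Set σ} {p : σ} : Sat I (atom p) ↔ p ∈ I := Iff.rfl

lemma sat_and {I : Set σ} {A B : Formula σ} : Sat I (and A B) ↔ Sat I A ∧ Sat I B := by
  constructor
  · intro h
    refine ⟨?_, ?_⟩
    · have := h true; simpa using this
    · have := h false; simpa using this
  · rintro ⟨hA, hB⟩ b; cases b <;> simpa [Sat]

lemma reduct_and {I : Set σ} {A B : Formula σ} :
    reduct I (and A B) = and (reduct I A) (reduct I B) := by
  simp only [and, reduct]
  congr 1
  funext b
  cases b <;> simp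

lemma sat_reduct_atom {I K : Set σ} {p : σ} :
    Sat K (reduct I (atom p)) ↔ p ∈ I ∧ p ∈ K := by
  by_cases hp : p ∈ I
  · rw [reduct, if_pos hp, sat_atom]
    exact ⟨fun h => ⟨hp, h⟩, fun h => h.2⟩
  · rw [reduct, if_neg hp]
    exact ⟨fun h => absurd h not_sat_bot, fun h => absurd h.1 hp⟩

lemma sat_conjAtoms {I : Set σ} {S : Set σ} : Sat I (conjAtoms S) ↔ S ⊆ I := by
  constructor
  · intro h p hp; exact h ⟨p, hp⟩
  · intro h p; exact h p.2

lemma sat_reduct_conjAtoms {I K : Set σ} {S : Set σ} :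
    Sat K (reduct I (conjAtoms S)) ↔ S ⊆ I ∩ K := by
  simp only [conjAtoms, reduct]
  constructor
  · intro h p hp
    exact sat_reduct_atom.mp (h ⟨p, hp⟩)
  · intro h p
    exact sat_reduct_atom.mpr (h p.2)

lemma atoms_conjAtoms {S : Set σ} : atoms (conjAtoms S) = S := by
  simp only [conjAtoms, atoms]
  ext p
  constructor
  · rintro hp
    simp only [Set.mem_iUnion] at hp
    obtain ⟨i, hi⟩ := hp
    simp only [atoms, Set.mem_singleton_iff] at hi
    subst hi; exact i.2
  · intro hp
    simp only [Set.mem_iUnion]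
    exact ⟨⟨p, hp⟩, by simp [atoms]⟩

lemma agree_of_diff {X Y A Q : Set σ} (h : X \ Q = Y \ Q) (hA : ∀ p ∈ Q, p ∉ A) :
    ∀ p ∈ A, (p ∈ X ↔ p ∈ Y) := by
  intro p hp
  have hpQ : p ∉ Q := fun hq => hA p hq hp
  constructor
  · intro hx
    have : p ∈ X \ Q := ⟨hx, hpQ⟩
    rw [h] at this; exact this.1
  · intro hy
    have : p ∈ Y \ Q := ⟨hy, hpQ⟩
    rw [← h] at this; exact this.1

/-- The one-step operator of a definition, relative to a fixed interpretation `J`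
of the non-`Q` atoms. -/
def defT {ι : Type} (H : ι → Formula σ) (C : ι → Set σ) (q : ι → σ) (J : Set σ) :
    Set σ →o Set σ :=
  ⟨fun S => {x | ∃ i, x = q i ∧ Sat J (H i) ∧ C i ⊆ S},
   fun S S' hSS x => by rintro ⟨i, rfl, h1, h2⟩; exact ⟨i, rfl, h1, h2.trans hSS⟩⟩

/-- The least fixpoint of `defT`. -/
def defD {ι : Type} (H : ι → Formula σ) (C : ι → Set σ) (q : ι → σ) (J : Set σ) : Set σ :=
  OrderHom.lfp (defT H C q J)

lemma defD_fixed {ι : Type} {H : ι → Formula σ} {C : ι → Set σ} {q : ι → σ} {J : Set σ} :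
    defT H C q J (defD H C q J) = defD H C q J := OrderHom.map_lfp _

lemma defD_le {ι : Type} {H : ι → Formula σ} {C : ι → Set σ} {q : ι → σ} {J S : Set σ}
    (h : defT H C q J S ⊆ S) : defD H C q J ⊆ S := OrderHom.lfp_le _ h

lemma defD_subset_Q {ι : Type} {H : ι → Formula σ} {C : ι → Set σ} {q : ι → σ} {J Q : Set σ}
    (hq : ∀ i, q i ∈ Q) : defD H C q J ⊆ Q := by
  apply defD_le
  rintro x ⟨i, rfl, -, -⟩
  exact hq i

/-- The canonical form of a definition for `Q`. -/
def defG {ι : Type} (H : ι → Formula σ) (C : ι → Set σ) (q : ι → σ) : Formula σ :=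
  conj ι (fun i => Formula.imp (and (H i) (conjAtoms (C i))) (atom (q i)))

end Formula
namespace Formula

variable {σ : Type}

lemma reduct_imp_pos {I : Set σ} {A B : Formula σ} (h : Sat I (Formula.imp A B)) :
    reduct I (Formula.imp A B) = Formula.imp (reduct I A) (reduct I B) := by
  rw [reduct, if_pos h]

lemma aux_diff {A D Q : Set σ} (hA : ∀ p ∈ A, p ∉ Q) (hD : D ⊆ Q) :
    (A ∪ D) \ Q = A := by
  ext p; simp only [Set.mem_diff, Set.mem_union]
  constructor
  · rintro ⟨hp | hp, hq⟩
    · exact hp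
    · exact absurd (hD hp) hq
  · intro hp; exact ⟨Or.inl hp, hA p hp⟩

lemma aux_inter {A D Q : Set σ} (hA : ∀ p ∈ A, p ∉ Q) (hD : D ⊆ Q) :
    (A ∪ D) ∩ Q = D := by
  ext p; simp only [Set.mem_inter_iff, Set.mem_union]
  constructor
  · rintro ⟨hp | hp, hq⟩
    · exact absurd hq (hA p hp)
    · exact hp
  · intro hp; exact ⟨Or.inr hp, hD hp⟩

lemma stable_diff_self {F : Formula σ} {Q : Set σ} (hF : ∀ p ∈ Q, p ∉ atoms F)
    {J : Set σ} (hJ : Stable J F) : J \ Q = J := by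
  apply hJ.2 (J \ Q) Set.diff_subset (Set.subset_univ _)
  exact (sat_congr (fun p hp =>
    agree_of_diff (by rw [Set.diff_diff, Set.union_self]) hF p (atoms_reduct hp))).mpr hJ.1

section Main

variable {ι : Type} {F : Formula σ} {Q : Set σ} {H : ι → Formula σ} {C : ι → Set σ} {q : ι → σ}

lemma fwd (hq : ∀ i, q i ∈ Q) (hC : ∀ i, C i ⊆ Q) (hH : ∀ i, ∀ p ∈ Q, p ∉ atoms (H i))
    (hF : ∀ p ∈ Q, p ∉ atoms F) {I : Set σ}
    (hI : Stable I (and F (defG H C q))) :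
    I = (I \ Q) ∪ defD H C q (I \ Q) ∧ Stable (I \ Q) F := by
  set J := I \ Q with hJdef
  have hJQ : ∀ p ∈ J, p ∉ Q := fun p hp => hp.2
  have hJJ : J \ Q = J := by rw [hJdef, Set.diff_diff, Set.union_self]
  have hIJdiff : I \ Q = J \ Q := by rw [hJJ]
  have agreeIJ_F : ∀ p ∈ atoms F, (p ∈ I ↔ p ∈ J) := agree_of_diff hIJdiff hF
  have agreeIJ_H : ∀ i, ∀ p ∈ atoms (H i), (p ∈ I ↔ p ∈ J) :=
    fun i => agree_of_diff hIJdiff (hH i)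
  have hsatFG : Sat I (and F (defG H C q)) := sat_reduct_self.mp hI.1
  have hsatF : Sat I F := (sat_and.mp hsatFG).1
  have hsatG : Sat I (defG H C q) := (sat_and.mp hsatFG).2
  have hsatGi : ∀ i, Sat I (Formula.imp (and (H i) (conjAtoms (C i))) (atom (q i))) := hsatG
  set D := defD H C q J with hDdef
  have hDQ : D ⊆ Q := defD_subset_Q hq
  have hDsub : D ⊆ I ∩ Q := by
    rw [hDdef]
    apply defD_le
    rintro x ⟨i, rfl, hSH, hCsub⟩
    have hCI : C i ⊆ I := fun p hp => (hCsub hp).1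
    have hHI : Sat I (H i) := (sat_congr (agreeIJ_H i)).mpr hSH
    have : Sat I (atom (q i)) := hsatGi i (sat_and.mpr ⟨hHI, sat_conjAtoms.mpr hCI⟩)
    exact ⟨this, hq i⟩
  have hDI : D ⊆ I := fun p hp => (hDsub hp).1
  -- the key construction: any K ⊆ I with K ∩ Q = D satisfies the reduct of the definition
  have hsatKG : ∀ K : Set σ, K ⊆ I → K ∩ Q = D →
      Sat K (reduct I (defG H C q)) := by
    intro K hKI hKQ
    have hKG : ∀ i, Sat K (reduct I (Formula.imp (and (H i) (conjAtoms (C i)))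
        (atom (q i)))) := by
      intro i
      rw [reduct_imp_pos (hsatGi i)]
      intro hant
      rw [reduct_and, sat_and] at hant
      obtain ⟨hH1, hC1⟩ := hant
      have hIH : Sat I (H i) := sat_of_sat_reduct hH1
      have hJH : Sat J (H i) := (sat_congr (agreeIJ_H i)).mp hIH
      have hCK : C i ⊆ K := fun p hp => (sat_reduct_conjAtoms.mp hC1 hp).2
      have hCD : C i ⊆ D := by
        intro p hp; rw [← hKQ]; exact ⟨hCK hp, hC i hp⟩
      have hqD : q i ∈ D := by
        rw [hDdef, ← defD_fixed]; exact ⟨i, rfl, hJH, hCD⟩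
      refine sat_reduct_atom.mpr ⟨hDI hqD, ?_⟩
      have : q i ∈ K ∩ Q := by rw [hKQ]; exact hqD
      exact this.1
    exact hKG
  have hKsub : J ∪ D ⊆ I := Set.union_subset Set.diff_subset hDI
  have hKQ : (J ∪ D) ∩ Q = D := aux_inter hJQ hDQ
  have hKJ : (J ∪ D) \ Q = J := aux_diff hJQ hDQ
  have hKI : J ∪ D = I := by
    apply hI.2 (J ∪ D) hKsub (Set.subset_univ _)
    rw [reduct_and, sat_and]
    constructor
    · refine (sat_reduct_congr ?_).mpr hsatF
      exact agree_of_diff (by rw [hKJ]) hF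
    · exact hsatKG (J ∪ D) hKsub hKQ
  refine ⟨hKI.symm, ?_, ?_⟩
  · exact sat_reduct_self.mpr ((sat_congr agreeIJ_F).mp hsatF)
  · intro K' hK'J _ hsatK'
    have hK'Q : ∀ p ∈ K', p ∉ Q := fun p hp => hJQ p (hK'J hp)
    set K := K' ∪ D with hKdef
    have hKsub' : K ⊆ I := Set.union_subset (hK'J.trans Set.diff_subset) hDI
    have hKQ' : K ∩ Q = D := aux_inter hK'Q hDQ
    have hKJ' : K \ Q = K' := aux_diff hK'Q hDQ
    have hK'diff : K' \ Q = K' := by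
      ext p; exact ⟨fun h => h.1, fun h => ⟨h, hK'Q p h⟩⟩
    have hKeqI : K = I := by
      apply hI.2 K hKsub' (Set.subset_univ _)
      rw [reduct_and, sat_and]
      constructor
      · rw [reduct_congr agreeIJ_F]
        refine (sat_congr ?_).mpr hsatK'
        intro p hp
        exact agree_of_diff (X := K) (Y := K') (by rw [hKJ', hK'diff]) hF p (atoms_reduct hp)
      · exact hsatKG K hKsub' hKQ'
    rw [← hKJ', hKeqI]

end Main

end Formula
namespace Formula

section Main2

variable {σ ι : Type} {F : Formula σ} {Q : Set σ} {H : ι → Formula σ} {C : ι → Set σ} {q : ι → σ}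

lemma bwd (hq : ∀ i, q i ∈ Q) (hC : ∀ i, C i ⊆ Q) (hH : ∀ i, ∀ p ∈ Q, p ∉ atoms (H i))
    (hF : ∀ p ∈ Q, p ∉ atoms F) {J : Set σ} (hJ : Stable J F) :
    Stable (J ∪ defD H C q J) (and F (defG H C q)) := by
  have hJJ : J \ Q = J := stable_diff_self hF hJ
  have hJQ : ∀ p ∈ J, p ∉ Q := fun p hp => by
    rw [← hJJ] at hp; exact hp.2
  set D := defD H C q J with hDdef
  have hDQ : D ⊆ Q := defD_subset_Q hq
  set I := J ∪ D with hIdef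
  have hIdiff : I \ Q = J := aux_diff hJQ hDQ
  have hIinter : I ∩ Q = D := aux_inter hJQ hDQ
  have hIJdiff : I \ Q = J \ Q := by rw [hIdiff, hJJ]
  have agreeIJ_F : ∀ p ∈ atoms F, (p ∈ I ↔ p ∈ J) := agree_of_diff hIJdiff hF
  have agreeIJ_H : ∀ i, ∀ p ∈ atoms (H i), (p ∈ I ↔ p ∈ J) :=
    fun i => agree_of_diff hIJdiff (hH i)
  have hsatJF : Sat J F := sat_reduct_self.mp hJ.1
  have hsatF : Sat I F := (sat_congr agreeIJ_F).mpr hsatJF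
  have hsatGi : ∀ i, Sat I (Formula.imp (and (H i) (conjAtoms (C i))) (atom (q i))) := by
    intro i hant
    rw [sat_and, sat_conjAtoms] at hant
    obtain ⟨hHI, hCI⟩ := hant
    have hJH : Sat J (H i) := (sat_congr (agreeIJ_H i)).mp hHI
    have hCD : C i ⊆ D := by
      intro p hp; rw [← hIinter]; exact ⟨hCI hp, hC i hp⟩
    have hqD : q i ∈ D := by
      rw [hDdef, ← defD_fixed]; exact ⟨i, rfl, hJH, hCD⟩
    exact (Or.inr hqD : q i ∈ J ∪ D)
  have hsatG : Sat I (defG H C q) := hsatGi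
  constructor
  · exact sat_reduct_self.mpr (sat_and.mpr ⟨hsatF, hsatG⟩)
  · intro K hKI _ hsatK
    rw [reduct_and, sat_and] at hsatK
    obtain ⟨hKF, hKG⟩ := hsatK
    -- Step a: K \ Q = J
    have hKQdiff : (K \ Q) \ Q = K \ Q := by rw [Set.diff_diff, Set.union_self]
    have hKQsat : Sat (K \ Q) (reduct J F) := by
      rw [reduct_congr agreeIJ_F] at hKF
      exact (sat_congr (fun p hp =>
        agree_of_diff hKQdiff hF p (atoms_reduct hp))).mpr hKF
    have hKQsubJ : K \ Q ⊆ J := by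
      intro p hp
      rcases hKI hp.1 with h | h
      · exact h
      · exact absurd (hDQ h) hp.2
    have hKQJ : K \ Q = J := hJ.2 (K \ Q) hKQsubJ (Set.subset_univ _) hKQsat
    -- Step b: D ⊆ K
    have hKGi : ∀ i, Sat K (reduct I (Formula.imp (and (H i) (conjAtoms (C i)))
        (atom (q i)))) := hKG
    have hDK : D ⊆ K ∩ Q := by
      rw [hDdef]
      apply defD_le
      rintro x ⟨i, rfl, hJH, hCsub⟩
      have hgK := hKGi i
      rw [reduct_imp_pos (hsatGi i)] at hgK
      have hant : Sat K (reduct I (and (H i) (conjAtoms (C i)))) := by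
        rw [reduct_and, sat_and]
        constructor
        · refine (sat_reduct_congr ?_).mpr ((sat_congr (agreeIJ_H i)).mpr hJH)
          intro p hp
          exact agree_of_diff (X := K) (Y := I) (by rw [hKQJ, hIdiff]) (hH i) p hp
        · rw [sat_reduct_conjAtoms]
          intro p hp
          exact ⟨hKI (hCsub hp).1, (hCsub hp).1⟩
      have hres := hgK hant
      rw [sat_reduct_atom] at hres
      exact ⟨hres.2, hq i⟩
    have hIK : I ⊆ K := by
      rw [hIdef]
      apply Set.union_subset
      · rw [← hKQJ]; exact Set.diff_subset
      · exact fun p hp => (hDK hp).1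
    exact Set.Subset.antisymm hKI hIK

end Main2

end Formula
/-- Theorem on Infinitary Definitions: if no atom of `Q` occurs
in `F` and `G` is a definition for `Q`, then `I ↦ I \ Q` is a one-to-one
correspondence between the stable models of `F ∧ G` and those of `F`. -/
theorem theorem_on_infinitary_definitions {σ : Type} (F : Formula σ)
    (Q : Set σ) (hQ : ∀ q ∈ Q, q ∉ Formula.atoms F) (G : Formula σ)
    (hdef : Formula.IsDefinition Q G) :
    Set.BijOn (fun I => I \ Q)
      {I : Set σ | Formula.Stable I (Formula.and F G)}
      {J : Set σ | Formula.Stable J F} := by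
  obtain ⟨ι, g, rfl, hg⟩ := hdef
  choose H C q hq hC hH hgeq using hg
  have hGeq : Formula.conj ι g = Formula.defG H C q := by
    unfold Formula.defG
    congr 1
    funext i
    exact hgeq i
  rw [hGeq]
  refine ⟨?_, ?_, ?_⟩
  · intro I hI
    exact (Formula.fwd hq hC hH hQ hI).2
  · intro I1 h1 I2 h2 heq
    have e1 := (Formula.fwd hq hC hH hQ h1).1
    have e2 := (Formula.fwd hq hC hH hQ h2).1
    simp only at heq
    rw [e1, e2, heq]
  · intro J hJ
    have hJJ := Formula.stable_diff_self hQ hJ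
    refine ⟨J ∪ Formula.defD H C q J, Formula.bwd hq hC hH hQ hJ, ?_⟩
    exact Formula.aux_diff (fun p hp => by rw [← hJJ] at hp; exact hp.2)
      (Formula.defD_subset_Q hq)
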